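/- Let V = ℚ⁴ with basis v₁,v₂,v₃,v₄ and let E ⊂ Λ²V be the 3-dimensional subspace spanned by v₁∧v₂ + v₃∧v₄, v₁∧v₃ − v₂∧v₄, and v₁∧v₄ + v₂∧v₃. Then E contains no nonzero decomposable element: if x, y ∈ V and x∧y ∈ E, then x∧y = 0 (i.e. x and y are linearly dependent). -/

import Mathlib

open ExteriorAlgebra

/-- The standard basis vectors of `ℚ⁴`. -/
noncomputable def stdVec (i : Fin 4) : Fin 4 → ℚ := Pi.single i 1

/-- The subspace `E ⊂ Λ²(ℚ⁴)` spanned by `v₁∧v₂ + v₃∧v₄`, `v₁∧v₃ − v₂∧v₄` and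
`v₁∧v₄ + v₂∧v₃`, viewed inside the exterior algebra of `ℚ⁴`. -/
noncomputable def Esub : Submodule ℚ (ExteriorAlgebra ℚ (Fin 4 → ℚ)) :=
  Submodule.span ℚ
    {ι ℚ (stdVec 0) * ι ℚ (stdVec 1) + ι ℚ (stdVec 2) * ι ℚ (stdVec 3),
     ι ℚ (stdVec 0) * ι ℚ (stdVec 2) - ι ℚ (stdVec 1) * ι ℚ (stdVec 3),
     ι ℚ (stdVec 0) * ι ℚ (stdVec 3) + ι ℚ (stdVec 1) * ι ℚ (stdVec 2)}

/-- The "top degree coefficient" functional on `Λ(ℚ⁴)`, given in degree 4 by the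
determinant of the four arguments, and zero in all other degrees. -/
noncomputable def detF : ExteriorAlgebra ℚ (Fin 4 → ℚ) →ₗ[ℚ] ℚ :=
  liftAlternating (fun i => match i with
    | 4 => Matrix.detRowAlternating
    | _ => 0)

lemma detF_quad (a b c d : Fin 4 → ℚ) :
    detF (ι ℚ a * (ι ℚ b * (ι ℚ c * ι ℚ d))) = Matrix.det (Matrix.of ![a, b, c, d]) := by
  have h := liftAlternating_apply_ιMulti (R := ℚ) (M := Fin 4 → ℚ) (N := ℚ)
    (fun i => match i with | 4 => Matrix.detRowAlternating | _ => 0) ![a, b, c, d]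
  rw [ιMulti_apply] at h
  simp only [List.ofFn_succ, List.ofFn_zero, List.prod_cons, List.prod_nil, mul_one] at h
  exact h

set_option maxHeartbeats 2000000 in
/-- `E` contains no nonzero decomposable element: if `x ∧ y ∈ E` then
`x ∧ y = 0`. -/
theorem stmt_8 (x y : Fin 4 → ℚ) (h : ι ℚ x * ι ℚ y ∈ Esub) :
    ι ℚ x * ι ℚ y = (0 : ExteriorAlgebra ℚ (Fin 4 → ℚ)) := by
  rw [Esub, Submodule.mem_span_insert] at h
  obtain ⟨a, z, hz, e⟩ := h
  rw [Submodule.mem_span_insert] at hz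
  obtain ⟨b, w, hw, e2⟩ := hz
  rw [Submodule.mem_span_singleton] at hw
  obtain ⟨c, e3⟩ := hw
  subst e3; subst e2
  have sq := congrArg (fun t => detF (t * t)) e
  simp only [mul_add, add_mul, sub_mul, mul_sub, smul_mul_assoc, mul_smul_comm,
    smul_smul, smul_sub, smul_add, map_add, map_sub, map_smul, mul_assoc, detF_quad] at sq
  have hdet0 : (Matrix.of ![x, y, x, y]).det = 0 :=
    Matrix.det_zero_of_row_eq (M := Matrix.of ![x, y, x, y]) (show (0:Fin 4) ≠ 2 by decide) rfl
  rw [hdet0] at sq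
  norm_num [stdVec, Matrix.det_succ_row_zero, Fin.sum_univ_succ, Pi.single_apply] at sq
  norm_num [Fin.succAbove, Fin.lt_def, Fin.ext_iff, show ((3:Fin 4):ℕ)=3 from rfl,
    show ((2:Fin 4):ℕ)=2 from rfl, show ((1:Fin 4):ℕ)=1 from rfl,
    show ((0:Fin 4):ℕ)=0 from rfl] at sq
  simp only [Matrix.cons_val_two, Matrix.vecHead, Matrix.vecTail, Function.comp_def, Fin.succ_zero_eq_one] at sq
  norm_num at sq
  have ha : a = 0 := by nlinarith [sq_nonneg a, sq_nonneg b, sq_nonneg c]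
  have hb : b = 0 := by nlinarith [sq_nonneg a, sq_nonneg b, sq_nonneg c]
  have hc : c = 0 := by nlinarith [sq_nonneg a, sq_nonneg b, sq_nonneg c]
  rw [e, ha, hb, hc]
  simp
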